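/- Let D₃ > 0 and D₄ > 0, and let (α_n)_{n∈ℕ} be complex numbers with |α_n| ≤ D₃ exp(−D₄ n^{3/2}) for all n ∈ ℕ. Then the power series Σ_{n≥0} α_n zⁿ converges absolutely for every z ∈ ℂ, and there exist constants C₁ > 0 and C₂ > 0 such that |Σ_{n≥0} α_n zⁿ| ≤ exp(C₁ + C₂ |log|z||³) for every z ∈ ℂ with z ≠ 0. -/

import Mathlib

/-- Stretched-exponential coefficient decay gives entire functions of
logarithmic-cube growth. If `|α_n| ≤ D₃ exp(−D₄ n^{3/2})` then `Σ α_n zⁿ` converges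
absolutely everywhere and `|Σ α_n zⁿ| ≤ exp(C₁ + C₂ |log|z||³)` for `z ≠ 0`. -/
theorem stmt_14 (D₃ D₄ : ℝ) (hD₃ : 0 < D₃) (hD₄ : 0 < D₄) (α : ℕ → ℂ)
    (hα : ∀ n : ℕ, ‖α n‖ ≤ D₃ * Real.exp (-D₄ * (n : ℝ) ^ (3/2 : ℝ))) :
    (∀ z : ℂ, Summable (fun n : ℕ => ‖α n * z ^ n‖)) ∧
    ∃ C₁ C₂ : ℝ, 0 < C₁ ∧ 0 < C₂ ∧ ∀ z : ℂ, z ≠ 0 →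
      ‖∑' n : ℕ, α n * z ^ n‖
        ≤ Real.exp (C₁ + C₂ * |Real.log (‖z‖)| ^ 3) := by
  have hsq : ∀ n : ℕ, ((n : ℝ)) ^ (3/2 : ℝ) = (n : ℝ) * Real.sqrt n := by
    intro n
    rw [show (3/2 : ℝ) = 1 + 1/2 by norm_num,
      Real.rpow_add' (Nat.cast_nonneg n) (by norm_num), Real.rpow_one,
      ← Real.sqrt_eq_rpow]
  set q : ℝ := Real.exp (-(D₄/2)) with hqdef
  have hq0 : 0 < q := Real.exp_pos _
  have hq1 : q < 1 := by rw [hqdef, Real.exp_lt_one_iff]; linarith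
  set C₂ : ℝ := 4 / D₄ ^ 2 with hC₂
  have hC₂0 : 0 < C₂ := by positivity
  have key : ∀ (n : ℕ) (L : ℝ), 0 ≤ L →
      (n : ℝ) * L ≤ D₄/2 * (n : ℝ) ^ (3/2 : ℝ) + C₂ * L ^ 3 := by
    intro n L hL
    rcases le_or_gt L (D₄/2 * Real.sqrt n) with h | h
    · have h1 : (n : ℝ) * L ≤ D₄/2 * (n : ℝ) ^ (3/2 : ℝ) := by
        rw [hsq]
        nlinarith [Nat.cast_nonneg (α := ℝ) n, Real.sqrt_nonneg (n : ℝ)]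
      nlinarith [pow_nonneg hL 3]
    · have hs := Real.sq_sqrt (Nat.cast_nonneg (α := ℝ) n)
      have hsn : Real.sqrt n < 2 * L / D₄ := by
        rw [lt_div_iff₀ hD₄]; nlinarith [h]
      have h2 : (n : ℝ) ≤ (2 * L / D₄) ^ 2 := by
        rw [← hs]; nlinarith [Real.sqrt_nonneg (n : ℝ)]
      have h3 : (n : ℝ) * L ≤ C₂ * L ^ 3 := by
        have h5 := mul_le_mul_of_nonneg_right h2 hL
        have h6 : (2 * L / D₄) ^ 2 * L = C₂ * L ^ 3 := by
          rw [hC₂]; field_simp; ring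
        linarith [h6 ▸ h5]
      nlinarith [Real.rpow_nonneg (Nat.cast_nonneg (α := ℝ) n) (3/2 : ℝ)]
  have hpow32 : ∀ n : ℕ, (n : ℝ) ≤ (n : ℝ) ^ (3/2 : ℝ) := by
    intro n
    rcases Nat.eq_zero_or_pos n with h | h
    · subst h; simp [Real.zero_rpow]
    · have h1 : (1 : ℝ) ≤ n := by exact_mod_cast h
      calc (n : ℝ) = (n : ℝ) ^ (1 : ℝ) := (Real.rpow_one _).symm
        _ ≤ (n : ℝ) ^ (3/2 : ℝ) := Real.rpow_le_rpow_of_exponent_le h1 (by norm_num)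
  have hbound : ∀ z : ℂ, z ≠ 0 → ∀ n : ℕ,
      ‖α n * z ^ n‖
        ≤ D₃ * Real.exp (C₂ * |Real.log (‖z‖)| ^ 3) * q ^ n := by
    intro z hz n
    have hzpos : 0 < ‖z‖ := by
      simpa [norm_pos_iff] using hz
    set L : ℝ := |Real.log (‖z‖)| with hLdef
    have hL0 : 0 ≤ L := abs_nonneg _
    have h0 : ‖z‖ ^ n = Real.exp ((n : ℝ) * Real.log (‖z‖)) := by
      rw [Real.exp_nat_mul, Real.exp_log hzpos]
    have h1 : ‖α n * z ^ n‖
        = ‖α n‖ * Real.exp ((n : ℝ) * Real.log (‖z‖)) := by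
      rw [norm_mul, norm_pow, h0]
    rw [h1]
    have h2 : ‖α n‖ * Real.exp ((n : ℝ) * Real.log (‖z‖))
        ≤ (D₃ * Real.exp (-D₄ * (n : ℝ) ^ (3/2 : ℝ))) * Real.exp ((n : ℝ) * L) := by
      apply mul_le_mul (hα n) ?_ (Real.exp_nonneg _) (by positivity)
      apply Real.exp_le_exp.2
      exact mul_le_mul_of_nonneg_left (le_abs_self _) (Nat.cast_nonneg n)
    refine h2.trans ?_
    rw [mul_assoc, ← Real.exp_add]
    have h3 : -D₄ * (n : ℝ) ^ (3/2 : ℝ) + (n : ℝ) * L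
        ≤ C₂ * L ^ 3 + -(D₄/2) * (n : ℝ) := by
      have hk := key n L hL0
      have h4 := mul_le_mul_of_nonneg_left (hpow32 n) (half_pos hD₄).le
      linarith
    calc D₃ * Real.exp (-D₄ * (n : ℝ) ^ (3/2 : ℝ) + (n : ℝ) * L)
        ≤ D₃ * Real.exp (C₂ * L ^ 3 + -(D₄/2) * (n : ℝ)) :=
          mul_le_mul_of_nonneg_left (Real.exp_le_exp.2 h3) hD₃.le
      _ = D₃ * Real.exp (C₂ * L ^ 3) * q ^ n := by
          rw [Real.exp_add, ← mul_assoc, hqdef,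
            mul_comm (-(D₄/2)) ((n : ℝ)), Real.exp_nat_mul]
  have hsumgeo : Summable (fun n : ℕ => q ^ n) :=
    summable_geometric_of_lt_one hq0.le hq1
  have habs : ∀ z : ℂ, Summable (fun n : ℕ => ‖α n * z ^ n‖) := by
    intro z
    rcases eq_or_ne z 0 with rfl | hz
    · apply summable_of_ne_finset_zero (s := {0})
      intro n hn
      simp only [Finset.mem_singleton] at hn
      simp [zero_pow hn]
    · exact Summable.of_nonneg_of_le (fun n => norm_nonneg _)
        (hbound z hz) (hsumgeo.mul_left _)
  refine ⟨habs, |Real.log (D₃ * (1 - q)⁻¹)| + 1, C₂, by positivity, hC₂0, ?_⟩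
  intro z hz
  set L : ℝ := |Real.log (‖z‖)| with hLdef
  have h5 : ‖∑' n : ℕ, α n * z ^ n‖
      ≤ ∑' n : ℕ, ‖α n * z ^ n‖ := by
    exact
      norm_tsum_le_tsum_norm (f := fun n : ℕ => α n * z ^ n)
        (habs z)
  have h6 : (∑' n : ℕ, ‖α n * z ^ n‖)
      ≤ ∑' n : ℕ, D₃ * Real.exp (C₂ * L ^ 3) * q ^ n :=
    Summable.tsum_le_tsum (hbound z hz) (habs z) (hsumgeo.mul_left _)
  have h7 : (∑' n : ℕ, D₃ * Real.exp (C₂ * L ^ 3) * q ^ n)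
      = D₃ * Real.exp (C₂ * L ^ 3) * (1 - q)⁻¹ := by
    rw [tsum_mul_left, tsum_geometric_of_lt_one hq0.le hq1]
  have h8 : D₃ * Real.exp (C₂ * L ^ 3) * (1 - q)⁻¹
      ≤ Real.exp (|Real.log (D₃ * (1 - q)⁻¹)| + 1 + C₂ * L ^ 3) := by
    have hpos : 0 < D₃ * (1 - q)⁻¹ := by
      have : 0 < 1 - q := by linarith
      positivity
    have h9 : D₃ * (1 - q)⁻¹ ≤ Real.exp (|Real.log (D₃ * (1 - q)⁻¹)| + 1) := by
      calc D₃ * (1 - q)⁻¹ = Real.exp (Real.log (D₃ * (1 - q)⁻¹)) :=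
            (Real.exp_log hpos).symm
        _ ≤ Real.exp (|Real.log (D₃ * (1 - q)⁻¹)| + 1) :=
            Real.exp_le_exp.2 (by linarith [le_abs_self (Real.log (D₃ * (1 - q)⁻¹))])
    calc D₃ * Real.exp (C₂ * L ^ 3) * (1 - q)⁻¹
        = D₃ * (1 - q)⁻¹ * Real.exp (C₂ * L ^ 3) := by ring
      _ ≤ Real.exp (|Real.log (D₃ * (1 - q)⁻¹)| + 1) * Real.exp (C₂ * L ^ 3) :=
          mul_le_mul_of_nonneg_right h9 (Real.exp_nonneg _)
      _ = Real.exp (|Real.log (D₃ * (1 - q)⁻¹)| + 1 + C₂ * L ^ 3) :=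
          (Real.exp_add _ _).symm
  linarith
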